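/- Let a : [0,T_a) → (0,∞) be the right-maximal solution of the ordinary differential equation a''(t) + (4π/3) a(t)⁻² = 0 with a(0) = 1, and assume a'(0) ≥ √(8π/3) (Case A). Then T_a = ∞, i.e. the solution exists on all of [0,∞), and a'(t) > 0 for all t ≥ 0. -/

import Mathlib

open MeasureTheory Real Set Filter
open scoped ENNReal RealInnerProductSpace

noncomputable section

/-- The time domain `[0, T)`, where `T` may be `∞`. -/
def Dom (T : ℝ≥0∞) : Set ℝ := {t : ℝ | 0 ≤ t ∧ ENNReal.ofReal t < T}

/-- `a` is a positive `C²` solution of `a'' + (4π/3) a⁻² = 0` on the set `s`. -/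
def SolvesScaleODE (a : ℝ → ℝ) (s : Set ℝ) : Prop :=
  (∀ t ∈ s, 0 < a t) ∧ ContDiffOn ℝ 2 a s ∧
  ∀ t ∈ s, deriv (deriv a) t + (4 * π / 3) * (a t ^ 2)⁻¹ = 0

/-- `a` is a right-maximal solution of `a'' + (4π/3) a⁻² = 0` on `[0, Ta)` with `a 0 = 1`:
no solution on a strictly larger interval `[0, Tb)` agrees with `a` on `[0, Ta)`. -/
def IsMaxScaleSol (a : ℝ → ℝ) (Ta : ℝ≥0∞) : Prop :=
  0 < Ta ∧ a 0 = 1 ∧ SolvesScaleODE a (Dom Ta) ∧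
  ∀ (b : ℝ → ℝ) (Tb : ℝ≥0∞), Ta < Tb → Set.EqOn b a (Dom Ta) →
    ¬ SolvesScaleODE b (Dom Tb)



lemma step1 {a : ℝ → ℝ} {Ta : ℝ≥0∞} (hmax : IsMaxScaleSol a Ta)
    (hA : Real.sqrt (8 * π / 3) ≤ deriv a 0) :
    ∀ t ∈ Dom Ta, 0 < deriv a t ∧ deriv a t ≤ deriv a 0 ∧ 1 ≤ a t ∧ a t ≤ 1 + deriv a 0 * t := by
  obtain ⟨hTa0, ha0, ⟨hpos, hC2, hode⟩, -⟩ := hmax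
  have hπ : (0:ℝ) < π := Real.pi_pos
  have hmem0 : (0:ℝ) ∈ Dom Ta := ⟨le_refl 0, by simpa using hTa0⟩
  have hsub : ∀ {t1 : ℝ}, t1 ∈ Dom Ta → Icc 0 t1 ⊆ Dom Ta := by
    intro t1 ht1 s hs
    exact ⟨hs.1, lt_of_le_of_lt (ENNReal.ofReal_le_ofReal hs.2) ht1.2⟩
  have hv0pos : 0 < deriv a 0 :=
    lt_of_lt_of_le (Real.sqrt_pos.mpr (by positivity)) hA
  -- deriv a is differentiable on Dom with explicit derivative
  have hvd : ∀ t ∈ Dom Ta, HasDerivAt (deriv a) (-(4 * π / 3) * (a t ^ 2)⁻¹) t := by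
    intro t ht
    have h1 : deriv (deriv a) t = -(4 * π / 3) * (a t ^ 2)⁻¹ := by
      linear_combination hode t ht
    have hat : 0 < a t := hpos t ht
    have hne : deriv (deriv a) t ≠ 0 := by
      rw [h1]
      have : 0 < (4 * π / 3) * (a t ^ 2)⁻¹ := by positivity
      intro hc
      rw [neg_mul] at hc
      linarith [neg_eq_zero.mp hc]
    have hdiff : DifferentiableAt ℝ (deriv a) t := by
      by_contra hc; exact hne (deriv_zero_of_not_differentiableAt hc)
    have := hdiff.hasDerivAt
    rwa [h1] at this
  have hOpen : ∀ t ∈ Dom Ta, 0 < t → ∃ r, t < r ∧ Ioo 0 r ⊆ Dom Ta := by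
    intro t ht htpos
    obtain ⟨r, hr0, h1, h2⟩ := ENNReal.lt_iff_exists_real_btwn.mp ht.2
    have htr : t < r := by
      by_contra hc
      push_neg at hc
      exact absurd (ENNReal.ofReal_le_ofReal hc) (not_le.mpr h1)
    refine ⟨r, htr, fun s hs => ⟨hs.1.le, lt_trans ?_ h2⟩⟩
    exact (ENNReal.ofReal_lt_ofReal_iff (htpos.trans htr)).mpr hs.2
  have haDiff : ∀ t ∈ Dom Ta, HasDerivAt a (deriv a t) t := by
    intro t ht
    rcases eq_or_lt_of_le ht.1 with h0 | h0
    · have hd : DifferentiableAt ℝ a t := by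
        by_contra hc
        have h2 : deriv a t = 0 := deriv_zero_of_not_differentiableAt hc
        rw [← h0] at h2
        linarith
      exact hd.hasDerivAt
    · obtain ⟨r, htr, hUsub⟩ := hOpen t ht h0
      have hca : ContDiffAt ℝ 2 a t :=
        (hC2.mono hUsub).contDiffAt (isOpen_Ioo.mem_nhds ⟨h0, htr⟩)
      exact (hca.differentiableAt (by norm_num)).hasDerivAt
  intro t1 ht1
  have hsub1 := hsub ht1
  have ht1' : (0:ℝ) ≤ t1 := ht1.1
  have hvd' : ∀ t ∈ Icc 0 t1, HasDerivAt (deriv a) (-(4 * π / 3) * (a t ^ 2)⁻¹) t :=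
    fun t ht => hvd t (hsub1 ht)
  have had' : ∀ t ∈ Icc 0 t1, HasDerivAt a (deriv a t) t := fun t ht => haDiff t (hsub1 ht)
  have hcontv : ContinuousOn (deriv a) (Icc 0 t1) :=
    fun t ht => ((hvd' t ht).differentiableAt).continuousAt.continuousWithinAt
  have hconta : ContinuousOn a (Icc 0 t1) :=
    fun t ht => ((had' t ht).differentiableAt).continuousAt.continuousWithinAt
  set E : ℝ → ℝ := fun t => (deriv a t) ^ 2 - (2 * (4 * π / 3)) * (a t)⁻¹ with hEdef
  have hEd : ∀ t ∈ Icc 0 t1, HasDerivAt E 0 t := by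
    intro t ht
    have hane : a t ≠ 0 := ne_of_gt (hpos t (hsub1 ht))
    have hp := (hvd' t ht).pow 2
    have hi := ((had' t ht).inv hane).const_mul (2 * (4 * π / 3))
    have hsum := hp.sub hi
    have hfun : E = deriv a ^ 2 - fun y => 2 * (4 * π / 3) * a⁻¹ y := by
      funext s; simp [hEdef]
    refine (hsum.congr_deriv ?_).congr_of_eventuallyEq (Filter.EventuallyEq.of_eq hfun)
    simp only [Nat.cast_ofNat, Nat.reduceSub]
    ring
  have hEconst : ∀ t ∈ Icc 0 t1, E t = E 0 :=
    constant_of_has_deriv_right_zero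
      (fun t ht => (hEd t ht).continuousAt.continuousWithinAt)
      (fun t ht => (hEd t (mem_Icc_of_Ico ht)).hasDerivWithinAt)
  have hE0 : 0 ≤ E 0 := by
    have h1 : Real.sqrt (8 * π / 3) ^ 2 ≤ (deriv a 0) ^ 2 :=
      pow_le_pow_left₀ (Real.sqrt_nonneg _) hA 2
    rw [Real.sq_sqrt (by positivity)] at h1
    have h2 : E 0 = (deriv a 0) ^ 2 - (2 * (4 * π / 3)) * (a 0)⁻¹ := rfl
    rw [h2, ha0]
    simp only [inv_one, mul_one]
    linarith
  have hvne : ∀ t ∈ Icc 0 t1, deriv a t ≠ 0 := by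
    intro t ht h0
    have h1 := hEconst t ht
    have hat : 0 < a t := hpos t (hsub1 ht)
    have h2 : 0 < (2 * (4 * π / 3)) * (a t)⁻¹ := by positivity
    have h3 : E t = (deriv a t) ^ 2 - (2 * (4 * π / 3)) * (a t)⁻¹ := rfl
    rw [h3, h0] at h1
    norm_num at h1
    rw [← h1] at hE0
    linarith
  have hvposAll : ∀ t ∈ Icc 0 t1, 0 < deriv a t := by
    intro t ht
    by_contra hc
    push_neg at hc
    have hlt : deriv a t < 0 := lt_of_le_of_ne hc (hvne t ht)
    have hmem : (0:ℝ) ∈ Icc (deriv a t) (deriv a 0) := ⟨hlt.le, hv0pos.le⟩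
    obtain ⟨c, hc1, hc2⟩ :=
      intermediate_value_Icc' ht.1 (hcontv.mono (Icc_subset_Icc_right ht.2)) hmem
    exact hvne c (Icc_subset_Icc_right ht.2 hc1) hc2
  have hintsub : interior (Icc 0 t1) ⊆ Icc 0 t1 := interior_subset
  have hanti : AntitoneOn (deriv a) (Icc 0 t1) := by
    apply antitoneOn_of_deriv_nonpos (convex_Icc 0 t1) hcontv
      (fun x hx => ((hvd' x (hintsub hx)).differentiableAt).differentiableWithinAt)
    intro x hx
    rw [(hvd' x (hintsub hx)).deriv]
    have hat : 0 < a x := hpos x (hsub1 (hintsub hx))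
    have : 0 < (4 * π / 3) * (a x ^ 2)⁻¹ := by positivity
    linarith
  have hvle : deriv a t1 ≤ deriv a 0 := hanti ⟨le_refl 0, ht1'⟩ ⟨ht1', le_refl t1⟩ ht1'
  have hmono : MonotoneOn a (Icc 0 t1) := by
    apply monotoneOn_of_deriv_nonneg (convex_Icc 0 t1) hconta
      (fun x hx => ((had' x (hintsub hx)).differentiableAt).differentiableWithinAt)
    intro x hx
    exact (hvposAll x (hintsub hx)).le
  have h1a : 1 ≤ a t1 := by
    have := hmono ⟨le_refl 0, ht1'⟩ ⟨ht1', le_refl t1⟩ ht1'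
    rwa [ha0] at this
  have hub : a t1 ≤ 1 + deriv a 0 * t1 := by
    set g : ℝ → ℝ := fun t => 1 + deriv a 0 * t - a t with hgdef
    have hgd : ∀ x ∈ Icc 0 t1, HasDerivAt g (deriv a 0 - deriv a x) x := by
      intro x hx
      have h1 : HasDerivAt (fun t : ℝ => 1 + deriv a 0 * t) (deriv a 0) x := by
        simpa using ((hasDerivAt_id x).const_mul (deriv a 0)).const_add 1
      exact h1.sub (had' x hx)
    have hgmono : MonotoneOn g (Icc 0 t1) := by
      apply monotoneOn_of_deriv_nonneg (convex_Icc 0 t1)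
        (fun x hx => (hgd x hx).continuousAt.continuousWithinAt)
        (fun x hx => (hgd x (hintsub hx)).differentiableAt.differentiableWithinAt)
      intro x hx
      rw [(hgd x (hintsub hx)).deriv]
      have := hanti ⟨le_refl 0, ht1'⟩ (hintsub hx) (hintsub hx).1
      linarith
    have := hgmono ⟨le_refl 0, ht1'⟩ ⟨ht1', le_refl t1⟩ ht1'
    have hg0 : g 0 = 0 := by simp [hgdef, ha0]
    rw [hg0] at this
    simp only [hgdef] at this
    linarith
  exact ⟨hvposAll t1 ⟨ht1', le_refl t1⟩, hvle, h1a, hub⟩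

def Fv (M k : ℝ) : ℝ → ℝ × ℝ → ℝ × ℝ :=
  fun _ p => (max (min p.2 M) (-M), -k * ((max p.1 (1/2:ℝ)) ^ 2)⁻¹)

lemma clamp_lip (M x y : ℝ) : |max (min x M) (-M) - max (min y M) (-M)| ≤ |x - y| := by
  refine (abs_max_sub_max_le_abs (min x M) (min y M) (-M)).trans ?_
  rcases le_total x M with h | h <;> rcases le_total y M with h' | h'
  · rw [min_eq_left h, min_eq_left h']
  · rw [min_eq_left h, min_eq_right h']
    exact abs_le.mpr ⟨by linarith [neg_abs_le (x - y)], by linarith [abs_nonneg (x - y)]⟩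
  · rw [min_eq_right h, min_eq_left h']
    exact abs_le.mpr ⟨by linarith [abs_nonneg (x - y)], by linarith [le_abs_self (x - y)]⟩
  · rw [min_eq_right h, min_eq_right h']
    simp [abs_nonneg]
lemma glip_aux {k : ℝ} (hk : 0 < k) (x y : ℝ) :
    |(-k * ((max x (1/2:ℝ)) ^ 2)⁻¹) - (-k * ((max y (1/2:ℝ)) ^ 2)⁻¹)| ≤ 16 * k * |x - y| := by
  set u := max x (1/2:ℝ) with hu'
  set w := max y (1/2:ℝ) with hw'
  have hu : (1/2:ℝ) ≤ u := le_max_right _ _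
  have hw : (1/2:ℝ) ≤ w := le_max_right _ _
  have hu0 : 0 < u := by linarith
  have hw0 : 0 < w := by linarith
  have key : |u - w| ≤ |x - y| := abs_max_sub_max_le_abs x y _
  have h1 : (-k * (u ^ 2)⁻¹) - (-k * (w ^ 2)⁻¹) = k * ((u - w) * (u + w)) / (u ^ 2 * w ^ 2) := by
    field_simp
    ring
  rw [h1, abs_div, abs_mul, abs_mul, abs_of_pos hk,
    abs_of_pos (by positivity : (0:ℝ) < u ^ 2 * w ^ 2),
    abs_of_pos (by positivity : (0:ℝ) < u + w), div_le_iff₀ (by positivity)]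
  have a1 : (1:ℝ) ≤ 8 * u * w ^ 2 := by nlinarith
  have a2 : (1:ℝ) ≤ 8 * w * u ^ 2 := by nlinarith
  have h16 : u + w ≤ 16 * (u ^ 2 * w ^ 2) := by nlinarith
  calc k * (|u - w| * (u + w)) ≤ k * (|u - w| * (16 * (u ^ 2 * w ^ 2))) := by
        have := abs_nonneg (u - w)
        gcongr
    _ = 16 * k * |u - w| * (u ^ 2 * w ^ 2) := by ring
    _ ≤ 16 * k * |x - y| * (u ^ 2 * w ^ 2) := by
        have : (0:ℝ) < u ^ 2 * w ^ 2 := by positivity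
        gcongr
    _ = 16 * k * |x - y| * (u ^ 2 * w ^ 2) := rfl

lemma Fv_lip {M k : ℝ} (hM : 1 ≤ M) (hk : 0 < k) (s : ℝ) :
    LipschitzWith (Real.toNNReal (1 + 16 * k)) (Fv M k s) := by
  apply LipschitzWith.of_dist_le_mul
  intro p q
  have hL : ((Real.toNNReal (1 + 16 * k)) : ℝ) = 1 + 16 * k :=
    Real.coe_toNNReal _ (by positivity)
  rw [Prod.dist_eq, Prod.dist_eq, hL]
  have hd1 : dist p.1 q.1 ≤ max (dist p.1 q.1) (dist p.2 q.2) := le_max_left _ _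
  have hd2 : dist p.2 q.2 ≤ max (dist p.1 q.1) (dist p.2 q.2) := le_max_right _ _
  have hdnn : 0 ≤ max (dist p.1 q.1) (dist p.2 q.2) := le_trans dist_nonneg hd1
  apply max_le
  · calc dist (Fv M k s p).1 (Fv M k s q).1 ≤ dist p.2 q.2 := by
          simp only [Fv, Real.dist_eq]
          exact clamp_lip M p.2 q.2
      _ ≤ max (dist p.1 q.1) (dist p.2 q.2) := hd2
      _ ≤ (1 + 16 * k) * max (dist p.1 q.1) (dist p.2 q.2) := by nlinarith
  · calc dist (Fv M k s p).2 (Fv M k s q).2 ≤ 16 * k * dist p.1 q.1 := by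
          simp only [Fv, Real.dist_eq]
          exact glip_aux hk p.1 q.1
      _ ≤ (1 + 16 * k) * max (dist p.1 q.1) (dist p.2 q.2) := by
          nlinarith [dist_nonneg (x := p.1) (y := q.1)]

lemma Fv_norm {M k : ℝ} (hM : 1 ≤ M) (hk : 0 < k) (s : ℝ) (p : ℝ × ℝ) :
    ‖Fv M k s p‖ ≤ max M (4 * k) := by
  have hM0 : (0:ℝ) ≤ M := by linarith
  rw [Prod.norm_def]
  apply max_le
  · have : ‖(Fv M k s p).1‖ = |max (min p.2 M) (-M)| := by simp [Fv, Real.norm_eq_abs]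
    rw [this]
    refine le_trans (abs_le.mpr ⟨le_max_right _ _, max_le (min_le_right _ _) (by linarith)⟩)
      (le_max_left _ _)
  · have hu : (1/2:ℝ) ≤ max p.1 (1/2:ℝ) := le_max_right _ _
    have hu0 : (0:ℝ) < max p.1 (1/2:ℝ) := by linarith
    have : ‖(Fv M k s p).2‖ = k * ((max p.1 (1/2:ℝ)) ^ 2)⁻¹ := by
      simp only [Fv, Real.norm_eq_abs, abs_mul, abs_neg, abs_of_pos hk]
      rw [abs_of_pos (by positivity)]
    rw [this]
    have h4 : ((max p.1 (1/2:ℝ)) ^ 2)⁻¹ ≤ 4 := by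
      have h14 : (1/4:ℝ) ≤ (max p.1 (1/2:ℝ)) ^ 2 := by nlinarith
      calc ((max p.1 (1/2:ℝ)) ^ 2)⁻¹ ≤ (1/4:ℝ)⁻¹ := by
            apply inv_anti₀ (by norm_num) h14
        _ = 4 := by norm_num
    refine le_trans ?_ (le_max_right M (4 * k))
    nlinarith

lemma step0v {a : ℝ → ℝ} {Ta : ℝ≥0∞} (hmax : IsMaxScaleSol a Ta) :
    ∀ t ∈ Dom Ta, HasDerivAt (deriv a) (-(4 * π / 3) * (a t ^ 2)⁻¹) t := by
  obtain ⟨-, -, ⟨hpos, -, hode⟩, -⟩ := hmax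
  intro t ht
  have hπ : (0:ℝ) < π := Real.pi_pos
  have h1 : deriv (deriv a) t = -(4 * π / 3) * (a t ^ 2)⁻¹ := by
    linear_combination hode t ht
  have hat : 0 < a t := hpos t ht
  have hne : deriv (deriv a) t ≠ 0 := by
    rw [h1]
    have : 0 < (4 * π / 3) * (a t ^ 2)⁻¹ := by positivity
    intro hc
    rw [neg_mul] at hc
    linarith [neg_eq_zero.mp hc]
  have hdiff : DifferentiableAt ℝ (deriv a) t := by
    by_contra hc; exact hne (deriv_zero_of_not_differentiableAt hc)
  have := hdiff.hasDerivAt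
  rwa [h1] at this

lemma domOpen {Ta : ℝ≥0∞} : ∀ t ∈ Dom Ta, 0 < t → ∃ r, t < r ∧ Ioo 0 r ⊆ Dom Ta := by
  intro t ht htpos
  obtain ⟨r, hr0, h1, h2⟩ := ENNReal.lt_iff_exists_real_btwn.mp ht.2
  have htr : t < r := by
    by_contra hc
    push_neg at hc
    exact absurd (ENNReal.ofReal_le_ofReal hc) (not_le.mpr h1)
  refine ⟨r, htr, fun s hs => ⟨hs.1.le, lt_trans ?_ h2⟩⟩
  exact (ENNReal.ofReal_lt_ofReal_iff (htpos.trans htr)).mpr hs.2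

lemma step0a {a : ℝ → ℝ} {Ta : ℝ≥0∞} (hmax : IsMaxScaleSol a Ta)
    (hA : Real.sqrt (8 * π / 3) ≤ deriv a 0) :
    ∀ t ∈ Dom Ta, HasDerivAt a (deriv a t) t := by
  have hπ : (0:ℝ) < π := Real.pi_pos
  have hv0pos : 0 < deriv a 0 :=
    lt_of_lt_of_le (Real.sqrt_pos.mpr (by positivity)) hA
  obtain ⟨-, -, ⟨hpos, hC2, -⟩, -⟩ := hmax
  intro t ht
  rcases eq_or_lt_of_le ht.1 with h0 | h0
  · have hd : DifferentiableAt ℝ a t := by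
      by_contra hc
      have h2 : deriv a t = 0 := deriv_zero_of_not_differentiableAt hc
      rw [← h0] at h2
      linarith
    exact hd.hasDerivAt
  · obtain ⟨r, htr, hUsub⟩ := domOpen t ht h0
    have hca : ContDiffAt ℝ 2 a t :=
      (hC2.mono hUsub).contDiffAt (isOpen_Ioo.mem_nhds ⟨h0, htr⟩)
    exact (hca.differentiableAt (by norm_num)).hasDerivAt

theorem caseA_global_expansion (a : ℝ → ℝ) (Ta : ℝ≥0∞)
    (hmax : IsMaxScaleSol a Ta)
    (hA : Real.sqrt (8 * π / 3) ≤ deriv a 0) :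
    Ta = ⊤ ∧ ∀ t : ℝ, 0 ≤ t → 0 < deriv a t := by
  have hπ : (0:ℝ) < π := Real.pi_pos
  have hs1 := step1 hmax hA
  have hvd := step0v hmax
  have haD := step0a hmax hA
  have hTa0 : 0 < Ta := hmax.1
  have ha0 : a 0 = 1 := hmax.2.1
  have hpos : ∀ t ∈ Dom Ta, 0 < a t := hmax.2.2.1.1
  have hC2 : ContDiffOn ℝ 2 a (Dom Ta) := hmax.2.2.1.2.1
  have hode : ∀ t ∈ Dom Ta, deriv (deriv a) t + (4 * π / 3) * (a t ^ 2)⁻¹ = 0 :=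
    hmax.2.2.1.2.2
  have hmaxP := hmax.2.2.2
  have hv0pos : 0 < deriv a 0 :=
    lt_of_lt_of_le (Real.sqrt_pos.mpr (by positivity)) hA
  have hTop : Ta = ⊤ := by
    by_contra hTa
    set T := Ta.toReal with hTdef
    have hTpos : 0 < T := ENNReal.toReal_pos hTa0.ne' hTa
    have hDomEq : Dom Ta = Ico 0 T := by
      ext t
      simp only [Dom, mem_setOf_eq, mem_Ico]
      exact and_congr_right fun h0 => ENNReal.ofReal_lt_iff_lt_toReal h0 hTa
    set v0 := deriv a 0 with hv0def
    set M₂ := v0 + 1 with hM₂def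
    have hM₂1 : 1 ≤ M₂ := by simp only [hM₂def]; linarith
    set C := max M₂ (4 * (4 * π / 3)) with hCdef
    have hC1 : 1 ≤ C := le_trans hM₂1 (le_max_left _ _)
    have hCpos : 0 < C := by linarith
    set η := 1 / (4 * C) with hηdef
    have hηpos : 0 < η := by positivity
    set t0 := max 0 (T - η / 2) with ht0def
    have ht0nonneg : 0 ≤ t0 := le_max_left _ _
    have ht0ltT : t0 < T := max_lt hTpos (by linarith)
    have ht0mem : t0 ∈ Dom Ta := by rw [hDomEq]; exact ⟨ht0nonneg, ht0ltT⟩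
    have hTt0 : T - t0 ≤ η / 2 := by
      simp only [ht0def]
      have := le_max_right 0 (T - η / 2)
      linarith [le_max_right (0:ℝ) (T - η / 2)]
    set k : ℝ := 4 * π / 3 with hkdef
    have hkpos : 0 < k := by positivity
    set F := Fv M₂ k with hFdef
    set L := Real.toNNReal (1 + 16 * k) with hLdef
    set x₀ : ℝ × ℝ := (a t0, deriv a t0) with hx₀def
    have hnorm : ∀ s : ℝ, ∀ p : ℝ × ℝ, ‖F s p‖ ≤ C := fun s p => Fv_norm hM₂1 hkpos s p
    have hFlip : ∀ s : ℝ, LipschitzWith L (F s) := fun s => Fv_lip hM₂1 hkpos s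
    have hC2η : C * (2 * η) = 1 / 2 := by
      rw [hηdef]
      field_simp
      ring
    have hPL : IsPicardLindelof F (tmin := t0) (tmax := t0 + 2 * η)
        ⟨t0, le_refl t0, by linarith⟩ x₀ 1 0 ⟨C, hCpos.le⟩ L := by
      constructor
      · exact fun s _ => (hFlip s).lipschitzOnWith
      · exact fun x _ => continuousOn_const
      · exact fun s _ x _ => hnorm s x
      · have h1 : max (t0 + 2 * η - t0) (t0 - t0) = 2 * η := by
          rw [max_eq_left] <;> linarith
        show C * max (t0 + 2 * η - t0) (t0 - t0) ≤ ((1:NNReal):ℝ) - ((0:NNReal):ℝ)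
        rw [h1, hC2η]
        norm_num
    obtain ⟨α, hα0', hαd⟩ := hPL.exists_eq_forall_mem_Icc_hasDerivWithinAt₀
    have hα0 : α t0 = x₀ := hα0'
    have hαnear : ∀ t ∈ Icc t0 (t0 + 2 * η), ‖α t - x₀‖ ≤ 1 / 2 := by
      intro t ht
      have h1 := norm_image_sub_le_of_norm_deriv_le_segment' hαd
        (fun s hs => hnorm s (α s)) t ht
      rw [hα0] at h1
      refine h1.trans ?_
      calc C * (t - t0) ≤ C * (2 * η) := by
            have := ht.2
            gcongr
            linarith
        _ = 1 / 2 := hC2η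
    obtain ⟨hvpos0, hvle0, h1le0, -⟩ := hs1 t0 ht0mem
    have hα1lb : ∀ t ∈ Icc t0 (t0 + 2 * η), (1/2:ℝ) ≤ (α t).1 := by
      intro t ht
      have h1 : |(α t).1 - a t0| ≤ 1/2 := by
        have h2 : ‖(α t - x₀).1‖ ≤ ‖α t - x₀‖ := norm_fst_le _
        simp only [Prod.fst_sub, hx₀def, Real.norm_eq_abs] at h2
        exact h2.trans (hαnear t ht)
      have := (abs_le.mp h1).1
      linarith
    have hα2b : ∀ t ∈ Icc t0 (t0 + 2 * η), -M₂ ≤ (α t).2 ∧ (α t).2 ≤ M₂ := by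
      intro t ht
      have h1 : |(α t).2 - deriv a t0| ≤ 1/2 := by
        have h2 : ‖(α t - x₀).2‖ ≤ ‖α t - x₀‖ := norm_snd_le _
        simp only [Prod.snd_sub, hx₀def, Real.norm_eq_abs] at h2
        exact h2.trans (hαnear t ht)
      obtain ⟨hl, hr⟩ := abs_le.mp h1
      constructor
      · simp only [hM₂def]; linarith
      · simp only [hM₂def]; linarith
    have hFα : ∀ t ∈ Icc t0 (t0 + 2 * η),
        F t (α t) = ((α t).2, -k * (((α t).1) ^ 2)⁻¹) := by
      intro t ht
      obtain ⟨h2l, h2r⟩ := hα2b t ht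
      have h1 := hα1lb t ht
      simp only [hFdef, Fv]
      rw [min_eq_left h2r, max_eq_left h2l, max_eq_left h1]
    have hFA : ∀ t ∈ Dom Ta, F t (a t, deriv a t) = (deriv a t, -k * ((a t) ^ 2)⁻¹) := by
      intro t ht
      obtain ⟨hv1, hv2, hv3, -⟩ := hs1 t ht
      simp only [hFdef, Fv]
      rw [min_eq_left (by simp only [hM₂def]; linarith),
        max_eq_left (by simp only [hM₂def]; linarith), max_eq_left (by linarith)]
    have hAd : ∀ t ∈ Dom Ta,
        HasDerivAt (fun s => (a s, deriv a s)) (F t (a t, deriv a t)) t := by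
      intro t ht
      rw [hFA t ht]
      exact (haD t ht).prodMk (by simpa only [hkdef] using hvd t ht)
    have hTle : T ≤ t0 + η / 2 := by linarith
    have huniq : ∀ t, t0 ≤ t → t < T → (a t, deriv a t) = α t := by
      intro t htt0 htT
      have hIccD : Icc t0 t ⊆ Dom Ta := by
        rw [hDomEq]
        exact fun s hs => ⟨ht0nonneg.trans hs.1, lt_of_le_of_lt hs.2 htT⟩
      have hsubIcc : Icc t0 t ⊆ Icc t0 (t0 + 2 * η) := by
        apply Icc_subset_Icc_right
        linarith
      have h := ODE_solution_unique (v := F) (K := L) hFlip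
        (fun s hs => (hAd s (hIccD hs)).continuousAt.continuousWithinAt)
        (fun s hs => (hAd s (hIccD (mem_Icc_of_Ico hs))).hasDerivWithinAt)
        (fun s hs => ((hαd s (hsubIcc hs)).continuousWithinAt).mono hsubIcc)
        (fun s hs => (hαd s (hsubIcc (mem_Icc_of_Ico hs))).mono_of_mem_nhdsWithin
          (Icc_mem_nhdsGE_of_mem ⟨hs.1, by linarith [hs.2, htT]⟩))
        (by rw [hα0])
      exact h ⟨htt0, le_refl t⟩
    set J := Ioo t0 (t0 + 2 * η) with hJdef
    have hJI : J ⊆ Icc t0 (t0 + 2 * η) := Ioo_subset_Icc_self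
    have hαJ : ∀ t ∈ J, HasDerivAt α (F t (α t)) t :=
      fun t ht => (hαd t (hJI ht)).hasDerivAt (Icc_mem_nhds ht.1 ht.2)
    have hd1 : ∀ t ∈ J, HasDerivAt (fun s => (α s).1) ((α t).2) t := by
      intro t ht
      have h := (hasFDerivAt_fst (E := ℝ) (F := ℝ) (𝕜 := ℝ)).comp_hasDerivAt t (hαJ t ht)
      rw [hFα t (hJI ht)] at h
      simpa [Function.comp_def] using h
    have hd2 : ∀ t ∈ J, HasDerivAt (fun s => (α s).2) (-k * (((α t).1) ^ 2)⁻¹) t := by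
      intro t ht
      have h := (hasFDerivAt_snd (E := ℝ) (F := ℝ) (𝕜 := ℝ)).comp_hasDerivAt t (hαJ t ht)
      rw [hFα t (hJI ht)] at h
      simpa [Function.comp_def] using h
    have hcα1 : ContinuousOn (fun s => (α s).1) J :=
      fun t ht => (hd1 t ht).differentiableAt.continuousAt.continuousWithinAt
    have hC2α2 : ContDiffOn ℝ 1 (fun s => (α s).2) J := by
      rw [show (1 : WithTop ℕ∞) = 0 + 1 by norm_num,
        contDiffOn_succ_iff_deriv_of_isOpen isOpen_Ioo]
      refine ⟨fun t ht => (hd2 t ht).differentiableAt.differentiableWithinAt, by simp, ?_⟩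
      rw [contDiffOn_zero]
      apply ContinuousOn.congr (f := fun s => -k * (((α s).1) ^ 2)⁻¹)
      · apply continuousOn_const.mul
        apply ContinuousOn.inv₀ (hcα1.pow 2)
        intro t ht
        have := hα1lb t (hJI ht)
        exact pow_ne_zero _ (by linarith : (0:ℝ) < (α t).1).ne'
      · exact fun t ht => (hd2 t ht).deriv
    have hC2α1 : ContDiffOn ℝ 2 (fun s => (α s).1) J := by
      rw [show (2 : WithTop ℕ∞) = 1 + 1 by norm_num,
        contDiffOn_succ_iff_deriv_of_isOpen isOpen_Ioo]
      refine ⟨fun t ht => (hd1 t ht).differentiableAt.differentiableWithinAt, by simp, ?_⟩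
      exact hC2α2.congr (fun t ht => (hd1 t ht).deriv)
    set Tb' := t0 + η with hTb'def
    have hTltTb' : T < Tb' := by simp only [hTb'def]; linarith
    have hTb'pos : 0 < Tb' := by positivity
    have hTb'lt : Tb' < t0 + 2 * η := by simp only [hTb'def]; linarith
    set b : ℝ → ℝ := fun t => if t < T then a t else (α t).1 with hbdef
    have hbeqa : EqOn b a (Iio T) := fun t ht => if_pos ht
    have hbeqα : ∀ t, t0 ≤ t → b t = (α t).1 := by
      intro t htt0
      by_cases htT : t < T
      · have := congrArg Prod.fst (huniq t htt0 htT)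
        simpa only [hbdef, if_pos htT] using this
      · simp only [hbdef, if_neg htT]
    have hDomTb : Dom (ENNReal.ofReal Tb') = Ico 0 Tb' := by
      ext t
      simp only [Dom, mem_setOf_eq, mem_Ico]
      exact and_congr_right fun h0 =>
        ⟨fun h1 => by rwa [ENNReal.ofReal_lt_ofReal_iff hTb'pos] at h1,
         fun h1 => (ENNReal.ofReal_lt_ofReal_iff hTb'pos).mpr h1⟩
    have hmemJ : ∀ t, ¬ t < T → t < Tb' → t ∈ J := by
      intro t htT hlt
      push_neg at htT
      exact ⟨lt_of_lt_of_le ht0ltT htT, lt_trans hlt hTb'lt⟩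
    have hSolves : SolvesScaleODE b (Dom (ENNReal.ofReal Tb')) := by
      rw [hDomTb]
      refine ⟨?_, ?_, ?_⟩
      · intro t ht
        by_cases htT : t < T
        · rw [hbeqa htT]
          exact hpos t (by rw [hDomEq]; exact ⟨ht.1, htT⟩)
        · have hJm := hmemJ t htT ht.2
          push_neg at htT
          rw [hbeqα t (le_trans ht0ltT.le htT)]
          linarith [hα1lb t (hJI hJm)]
      · intro t ht
        by_cases htT : t < T
        · have hmem : t ∈ Dom Ta := by rw [hDomEq]; exact ⟨ht.1, htT⟩
          have h1 : ContDiffWithinAt ℝ 2 a (Dom Ta) t := hC2 t hmem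
          have hsetEq : Dom Ta =ᶠ[nhds t] Ico (0:ℝ) Tb' := by
            rw [hDomEq]
            filter_upwards [Iio_mem_nhds htT] with s hs
            simp only [mem_Ico, eq_iff_iff]
            exact ⟨fun h => ⟨h.1, lt_trans h.2 hTltTb'⟩, fun h => ⟨h.1, hs⟩⟩
          have h2 := h1.congr_set hsetEq
          have hev : b =ᶠ[nhds t] a := eventuallyEq_of_mem (Iio_mem_nhds htT) hbeqa
          exact h2.congr_of_eventuallyEq (hev.filter_mono nhdsWithin_le_nhds) (hbeqa htT)
        · have hJm := hmemJ t htT ht.2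
          push_neg at htT
          have h1 : ContDiffAt ℝ 2 (fun s => (α s).1) t :=
            hC2α1.contDiffAt (isOpen_Ioo.mem_nhds hJm)
          have hev : b =ᶠ[nhds t] (fun s => (α s).1) :=
            eventuallyEq_of_mem (Ioi_mem_nhds (lt_of_lt_of_le ht0ltT htT))
              (fun s hs => hbeqα s (le_of_lt hs))
          exact (h1.congr_of_eventuallyEq hev).contDiffWithinAt
      · intro t ht
        by_cases htT : t < T
        · have hmem : t ∈ Dom Ta := by rw [hDomEq]; exact ⟨ht.1, htT⟩
          have hev : b =ᶠ[nhds t] a := eventuallyEq_of_mem (Iio_mem_nhds htT) hbeqa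
          have h2 : deriv (deriv b) t = deriv (deriv a) t := (hev.deriv).deriv_eq
          rw [h2, show b t = a t from hbeqa htT]
          exact hode t hmem
        · have hJm := hmemJ t htT ht.2
          push_neg at htT
          have hev : b =ᶠ[nhds t] (fun s => (α s).1) :=
            eventuallyEq_of_mem (Ioi_mem_nhds (lt_of_lt_of_le ht0ltT htT))
              (fun s hs => hbeqα s (le_of_lt hs))
          have hev2 : deriv (fun s => (α s).1) =ᶠ[nhds t] (fun s => (α s).2) :=
            eventuallyEq_of_mem (isOpen_Ioo.mem_nhds hJm) (fun s hs => (hd1 s hs).deriv)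
          have h3 : deriv (deriv b) t = deriv (fun s => (α s).2) t :=
            (hev.deriv.trans hev2).deriv_eq
          have h4 : deriv (fun s => (α s).2) t = -k * (((α t).1) ^ 2)⁻¹ := (hd2 t hJm).deriv
          have h5 : b t = (α t).1 := hbeqα t (le_trans ht0ltT.le htT)
          rw [h3, h4, h5, hkdef]
          ring
    exact hmaxP b (ENNReal.ofReal Tb')
      ((ENNReal.lt_ofReal_iff_toReal_lt hTa).mpr hTltTb')
      (fun s hs => hbeqa (show s < T by rw [hDomEq] at hs; exact hs.2)) hSolves
  refine ⟨hTop, fun t ht => ?_⟩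
  have hmem : t ∈ Dom Ta := ⟨ht, by rw [hTop]; exact ENNReal.ofReal_lt_top⟩
  exact (hs1 t hmem).1
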